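/- Let (S,T) be a pair of random variables on {0,...,m} × {0,...,n}, and let 1 ≤ s,k ≤ m and 1 ≤ t,l ≤ n. Then P(S ≥ s, T ≥ t) ≥ 1 − (C(m,k)C(n,l) − E[(C(m,k) − C(m−S,k))(C(n,l) − C(n−T,l))]) / (C(m−s+1,k) C(n−t+1,l)). (Fréchet-type lower bound) -/

import Mathlib

open MeasureTheory

theorem bivariate_frechet_type_lower_bound
    {Ω : Type*} [MeasurableSpace Ω] (μ : Measure Ω) [IsProbabilityMeasure μ]
    (m n : ℕ) (S T : Ω → ℕ) (hS : Measurable S) (hT : Measurable T)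
    (hSm : ∀ᵐ ω ∂μ, S ω ≤ m) (hTn : ∀ᵐ ω ∂μ, T ω ≤ n)
    (s t k l : ℕ) (hs1 : 1 ≤ s) (hsm : s ≤ m) (hk1 : 1 ≤ k) (hkm : k ≤ m)
    (ht1 : 1 ≤ t) (htn : t ≤ n) (hl1 : 1 ≤ l) (hln : l ≤ n)
    (hpos1 : 0 < (m - s + 1).choose k) (hpos2 : 0 < (n - t + 1).choose l) :
    (μ {ω | s ≤ S ω ∧ t ≤ T ω}).toReal ≥
      1 - ((m.choose k : ℝ) * (n.choose l : ℝ) -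
            ∫ ω, ((m.choose k : ℝ) - ((m - S ω).choose k)) *
              ((n.choose l : ℝ) - ((n - T ω).choose l)) ∂μ) /
          (((m - s + 1).choose k : ℝ) * ((n - t + 1).choose l : ℝ)) := by
  set A : Set Ω := {ω | s ≤ S ω ∧ t ≤ T ω} with hA
  set f : Ω → ℝ := fun ω => ((m.choose k : ℝ) - ((m - S ω).choose k)) *
      ((n.choose l : ℝ) - ((n - T ω).choose l)) with hf
  set CC : ℝ := (m.choose k : ℝ) * (n.choose l : ℝ) with hCC
  set D : ℝ := ((m - s + 1).choose k : ℝ) * ((n - t + 1).choose l : ℝ) with hD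
  have hDpos : 0 < D := by
    apply mul_pos <;> exact_mod_cast ‹_›
  have hAmeas : MeasurableSet A := by
    have : A = S ⁻¹' (Set.Ici s) ∩ T ⁻¹' (Set.Ici t) := rfl
    rw [this]
    exact (hS measurableSet_Ici).inter (hT measurableSet_Ici)
  -- pointwise bounds
  have hfac1 : ∀ ω, (0 : ℝ) ≤ (m.choose k : ℝ) - ((m - S ω).choose k) := by
    intro ω
    have : ((m - S ω).choose k) ≤ m.choose k := Nat.choose_le_choose k (Nat.sub_le m _)
    have := (Nat.cast_le (α := ℝ)).2 this
    linarith
  have hfac1' : ∀ ω, (m.choose k : ℝ) - ((m - S ω).choose k) ≤ (m.choose k : ℝ) := by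
    intro ω
    have : (0:ℝ) ≤ ((m - S ω).choose k : ℝ) := Nat.cast_nonneg _
    linarith
  have hfac2 : ∀ ω, (0 : ℝ) ≤ (n.choose l : ℝ) - ((n - T ω).choose l) := by
    intro ω
    have : ((n - T ω).choose l) ≤ n.choose l := Nat.choose_le_choose l (Nat.sub_le n _)
    have := (Nat.cast_le (α := ℝ)).2 this
    linarith
  have hfac2' : ∀ ω, (n.choose l : ℝ) - ((n - T ω).choose l) ≤ (n.choose l : ℝ) := by
    intro ω
    have : (0:ℝ) ≤ ((n - T ω).choose l : ℝ) := Nat.cast_nonneg _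
    linarith
  have hbound : ∀ ω, f ω ≤ CC := by
    intro ω
    exact mul_le_mul (hfac1' ω) (hfac2' ω) (hfac2 ω) (Nat.cast_nonneg _)
  have hf0 : ∀ ω, 0 ≤ f ω := fun ω => mul_nonneg (hfac1 ω) (hfac2 ω)
  -- key pointwise inequality
  have hkey : ∀ ω, f ω + Aᶜ.indicator (fun _ => D) ω ≤ CC := by
    intro ω
    by_cases hω : ω ∈ A
    · rw [Set.indicator_of_notMem (by simpa using hω)]
      simpa using hbound ω
    · rw [Set.indicator_of_mem (by simpa using hω)]
      have hω' : ¬ (s ≤ S ω ∧ t ≤ T ω) := hω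
      rw [not_and_or] at hω'
      have hDle1 : ((m - s + 1).choose k : ℝ) ≤ (m.choose k : ℝ) := by
        exact_mod_cast Nat.choose_le_choose k (by omega)
      have hDle2 : ((n - t + 1).choose l : ℝ) ≤ (n.choose l : ℝ) := by
        exact_mod_cast Nat.choose_le_choose l (by omega)
      have hD1pos : (0:ℝ) < ((m - s + 1).choose k : ℝ) := by exact_mod_cast hpos1
      have hD2pos : (0:ℝ) < ((n - t + 1).choose l : ℝ) := by exact_mod_cast hpos2
      rcases hω' with h | h
      · -- S ω < s, so m - S ω ≥ m - s + 1
        have h1 : ((m - s + 1).choose k : ℝ) ≤ ((m - S ω).choose k : ℝ) := by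
          exact_mod_cast Nat.choose_le_choose k (by omega)
        have hfa : (m.choose k : ℝ) - ((m - S ω).choose k) ≤
            (m.choose k : ℝ) - ((m - s + 1).choose k : ℝ) := by linarith
        have : f ω ≤ ((m.choose k : ℝ) - ((m - s + 1).choose k : ℝ)) * (n.choose l : ℝ) :=
          mul_le_mul hfa (hfac2' ω) (hfac2 ω) (by linarith)
        have hDD : D ≤ ((m - s + 1).choose k : ℝ) * (n.choose l : ℝ) := by
          rw [hD]; apply mul_le_mul_of_nonneg_left hDle2 (le_of_lt hD1pos)
        nlinarith
      · have h1 : ((n - t + 1).choose l : ℝ) ≤ ((n - T ω).choose l : ℝ) := by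
          exact_mod_cast Nat.choose_le_choose l (by omega)
        have hfa : (n.choose l : ℝ) - ((n - T ω).choose l) ≤
            (n.choose l : ℝ) - ((n - t + 1).choose l : ℝ) := by linarith
        have : f ω ≤ (m.choose k : ℝ) * ((n.choose l : ℝ) - ((n - t + 1).choose l : ℝ)) :=
          mul_le_mul (hfac1' ω) hfa (hfac2 ω) (Nat.cast_nonneg _)
        have hDD : D ≤ (m.choose k : ℝ) * ((n - t + 1).choose l : ℝ) := by
          rw [hD]; apply mul_le_mul_of_nonneg_right hDle1 (le_of_lt hD2pos)
        nlinarith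
  -- measurability and integrability of f
  have hfmeas : Measurable f := by
    apply Measurable.mul
    · exact (measurable_const.sub ((measurable_from_top
        (f := fun x : ℕ => (((m - x).choose k : ℝ)))).comp hS))
    · exact (measurable_const.sub ((measurable_from_top
        (f := fun x : ℕ => (((n - x).choose l : ℝ)))).comp hT))
  have hfint : Integrable f μ := by
    apply Integrable.mono' (integrable_const CC) hfmeas.aestronglyMeasurable
    filter_upwards with ω
    rw [Real.norm_eq_abs, abs_of_nonneg (hf0 ω)]
    exact hbound ω
  have hindint : Integrable (Aᶜ.indicator (fun _ => D)) μ :=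
    (integrable_const D).indicator hAmeas.compl
  -- integrate
  have hint : ∫ ω, (f ω + Aᶜ.indicator (fun _ => D) ω) ∂μ ≤ CC := by
    calc ∫ ω, (f ω + Aᶜ.indicator (fun _ => D) ω) ∂μ
        ≤ ∫ _, CC ∂μ := integral_mono (hfint.add hindint) (integrable_const CC) hkey
      _ = CC := by simp
  rw [integral_add hfint hindint, integral_indicator hAmeas.compl,
    setIntegral_const] at hint
  have hμA : (μ A) ≠ ⊤ := measure_ne_top μ A
  have hcompl : (μ Aᶜ).toReal = 1 - (μ A).toReal := by
    have h1 : μ A + μ Aᶜ = 1 := by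
      rw [measure_add_measure_compl hAmeas]; exact measure_univ
    have := congrArg ENNReal.toReal h1
    rw [ENNReal.toReal_add hμA (measure_ne_top μ Aᶜ)] at this
    simp at this
    linarith
  rw [measureReal_def, hcompl] at hint
  set P := (μ A).toReal with hP
  simp only [smul_eq_mul] at hint
  have h2 : (1 - P) ≤ (CC - ∫ ω, f ω ∂μ) / D := by
    rw [le_div_iff₀ hDpos]; linarith
  linarith
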